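/- Let g be a standard Gaussian vector in ℝ^p, x ∈ ℝ^p with support S, and let w ∈ ℝ^p be strictly positive, t ≥ 0. Then E[dist²(g, t·∂‖·‖_{1,w}(x))] = |S| + Σ_{i ∈ S} (t wᵢ)² + Σ_{i ∉ S} φ(t wᵢ), where φ(z) = √(2/π) ∫_z^∞ (u - z)² exp(-u²/2) du. -/

import Mathlib

open MeasureTheory ProbabilityTheory

section Stmt7Aux

open Real Set Filter

-- basic integrability lemmas
lemma auxL1 : Integrable (fun x : ℝ => Real.exp (-x^2/2)) := by
  have h := integrable_exp_neg_mul_sq (b := (1:ℝ)/2) (by norm_num)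
  exact h.congr (ae_of_all _ fun x => by simp only []; rw [show -(1/2:ℝ)*x^2 = -x^2/2 by ring])

lemma auxL2 : Integrable (fun x : ℝ => x * Real.exp (-x^2/2)) := by
  have h := integrable_mul_exp_neg_mul_sq (b := (1:ℝ)/2) (by norm_num)
  exact h.congr (ae_of_all _ fun x => by simp only []; rw [show -(1/2:ℝ)*x^2 = -x^2/2 by ring])

lemma auxL3 : Integrable (fun x : ℝ => x^2 * Real.exp (-x^2/2)) := by
  have h := (integrable_exp_neg_mul_sq (b := (1:ℝ)/4) (by norm_num)).const_mul 4
  refine h.mono' ?_ ?_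
  · exact ((continuous_pow 2).mul (Real.continuous_exp.comp (by continuity))).aestronglyMeasurable
  · refine ae_of_all _ fun x => ?_
    rw [Real.norm_eq_abs, abs_of_nonneg (by positivity)]
    have hy : x^2 ≤ 4 * Real.exp (x^2/4) := by nlinarith [Real.add_one_le_exp (x^2/4)]
    have e1 : Real.exp (-x^2/2) = Real.exp (-x^2/4) * Real.exp (-x^2/4) := by
      rw [← Real.exp_add]; ring_nf
    have e2 : Real.exp (x^2/4) * Real.exp (-x^2/4) = 1 := by
      rw [← Real.exp_add]; ring_nf; exact Real.exp_zero
    have e3 : -(1/4 : ℝ) * x ^ 2 = -x^2/4 := by ring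
    rw [e3, e1]
    nlinarith [Real.exp_pos (-x^2/4), Real.exp_pos (x^2/4)]

lemma auxT1 : Tendsto (fun x : ℝ => x * Real.exp (-x^2/2)) atTop (nhds 0) := by
  have hup : Tendsto (fun x : ℝ => x * Real.exp (-x)) atTop (nhds 0) := by
    simpa using Real.tendsto_pow_mul_exp_neg_atTop_nhds_zero 1
  refine tendsto_of_tendsto_of_tendsto_of_le_of_le' tendsto_const_nhds hup ?_ ?_
  · filter_upwards [eventually_ge_atTop (0:ℝ)] with x hx
    positivity
  · filter_upwards [eventually_ge_atTop (2:ℝ)] with x hx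
    have h1 : -x^2/2 ≤ -x := by nlinarith
    exact mul_le_mul_of_nonneg_left (Real.exp_le_exp.mpr h1) (by linarith)

lemma auxT2 : Tendsto (fun x : ℝ => x * Real.exp (-x^2/2)) atBot (nhds 0) := by
  have h : Tendsto ((fun x : ℝ => x * Real.exp (-x^2/2)) ∘ Neg.neg) atTop (nhds 0) := by
    refine Tendsto.congr (f₁ := fun x : ℝ => -(x * Real.exp (-x^2/2))) ?_ ?_
    · intro x; simp [Function.comp, neg_sq, neg_mul]
    · simpa using auxT1.neg
  have h2 := h.comp tendsto_neg_atBot_atTop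
  refine h2.congr fun x => ?_
  simp [Function.comp]

lemma auxI0 : ∫ x : ℝ, Real.exp (-x^2/2) = Real.sqrt (2*Real.pi) := by
  have h := integral_gaussian (1/2 : ℝ)
  rw [show Real.pi / (1/2 : ℝ) = 2*Real.pi by ring] at h
  rw [← h]
  refine integral_congr_ae (ae_of_all _ fun x => ?_)
  simp only []
  rw [show -(1/2:ℝ)*x^2 = -x^2/2 by ring]

lemma auxHD : ∀ x : ℝ, HasDerivAt (fun y : ℝ => -Real.exp (-y^2/2)) (x * Real.exp (-x^2/2)) x := by
  intro x
  have h1 : HasDerivAt (fun y : ℝ => -y^2/2) (-x) x := by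
    have := ((hasDerivAt_pow 2 x).neg.div_const 2)
    simpa using this.congr_deriv (by ring_nf)
  have h2 := (Real.hasDerivAt_exp (-x^2/2)).comp x h1
  have h3 := h2.neg
  refine h3.congr_deriv ?_
  ring

lemma auxI1 : ∫ x : ℝ, x * Real.exp (-x^2/2) = 0 := by
  have hbot : Tendsto (fun y : ℝ => -Real.exp (-y^2/2)) atBot (nhds 0) := by
    have : Tendsto (fun y : ℝ => Real.exp (-y^2/2)) atBot (nhds 0) := by
      apply Real.tendsto_exp_atBot.comp
      have hsq : Tendsto (fun y : ℝ => y^2) atBot atTop :=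
        Tendsto.congr (fun x => by simp [Function.comp])
          ((tendsto_pow_atTop (n := 2) two_ne_zero).comp tendsto_neg_atBot_atTop)
      have : Tendsto (fun y : ℝ => -y^2) atBot atBot := tendsto_neg_atTop_atBot.comp hsq
      exact this.atBot_div_const (by norm_num)
    simpa using this.neg
  have htop : Tendsto (fun y : ℝ => -Real.exp (-y^2/2)) atTop (nhds 0) := by
    have : Tendsto (fun y : ℝ => Real.exp (-y^2/2)) atTop (nhds 0) := by
      apply Real.tendsto_exp_atBot.comp
      have hsq : Tendsto (fun y : ℝ => y^2) atTop atTop := tendsto_pow_atTop two_ne_zero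
      have : Tendsto (fun y : ℝ => -y^2) atTop atBot := tendsto_neg_atTop_atBot.comp hsq
      exact this.atBot_div_const (by norm_num)
    simpa using this.neg
  have := integral_of_hasDerivAt_of_tendsto auxHD auxL2 hbot htop
  simpa using this

lemma auxI2 : ∫ x : ℝ, x^2 * Real.exp (-x^2/2) = Real.sqrt (2*Real.pi) := by
  have hu : ∀ x : ℝ, HasDerivAt (fun y : ℝ => y) ((fun _ : ℝ => (1:ℝ)) x) x :=
    fun x => hasDerivAt_id x
  have huv' : Integrable ((fun y : ℝ => y) * (fun x : ℝ => x * Real.exp (-x^2/2))) := by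
    refine auxL3.congr (ae_of_all _ fun x => ?_)
    simp [Pi.mul_apply]; ring
  have hu'v : Integrable ((fun _ : ℝ => (1:ℝ)) * (fun y : ℝ => -Real.exp (-y^2/2))) := by
    refine auxL1.neg.congr (ae_of_all _ fun x => ?_)
    simp [Pi.mul_apply]
  have hbot : Tendsto ((fun y : ℝ => y) * (fun y : ℝ => -Real.exp (-y^2/2))) atBot (nhds 0) := by
    have := auxT2.neg
    simp only [neg_zero] at this
    refine this.congr fun x => ?_
    simp [Pi.mul_apply]
  have htop : Tendsto ((fun y : ℝ => y) * (fun y : ℝ => -Real.exp (-y^2/2))) atTop (nhds 0) := by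
    have := auxT1.neg
    simp only [neg_zero] at this
    refine this.congr fun x => ?_
    simp [Pi.mul_apply]
  have h := MeasureTheory.integral_mul_deriv_eq_deriv_mul (fun x _ => hu x) (fun x _ => auxHD x) huv' hu'v hbot htop
  have h2 : ∫ x : ℝ, x * (x * Real.exp (-x^2/2)) = ∫ x : ℝ, x^2 * Real.exp (-x^2/2) :=
    integral_congr_ae (ae_of_all _ fun x => by simp only []; ring)
  rw [h2] at h
  rw [h]
  have h3 : ∫ x : ℝ, (1:ℝ) * -Real.exp (-x^2/2) = -∫ x : ℝ, Real.exp (-x^2/2) := by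
    rw [← integral_neg]
    exact integral_congr_ae (ae_of_all _ fun x => by simp)
  rw [h3, auxI0]
  ring

lemma auxPDF (y : ℝ) : gaussianPDFReal 0 1 y = (Real.sqrt (2*Real.pi))⁻¹ * Real.exp (-y^2/2) := by
  simp [gaussianPDFReal]

lemma auxDensity : gaussianReal 0 1 =
    (volume : Measure ℝ).withDensity (fun x => ((gaussianPDFReal 0 1 x).toNNReal : ENNReal)) := by
  rw [gaussianReal_of_var_ne_zero 0 one_ne_zero]
  rfl

lemma auxMeasNN : Measurable (fun x => (gaussianPDFReal 0 1 x).toNNReal) :=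
  (measurable_gaussianPDFReal 0 1).real_toNNReal

lemma auxGeq (f : ℝ → ℝ) :
    ∫ y, f y ∂(gaussianReal 0 1) = ∫ y, gaussianPDFReal 0 1 y * f y := by
  rw [auxDensity, integral_withDensity_eq_integral_smul auxMeasNN]
  refine integral_congr_ae (ae_of_all _ fun y => ?_)
  simp only [NNReal.smul_def, smul_eq_mul]
  rw [Real.coe_toNNReal _ (gaussianPDFReal_nonneg 0 1 y)]

lemma auxGint (f : ℝ → ℝ) (hf : Integrable (fun y => gaussianPDFReal 0 1 y * f y)) :
    Integrable f (gaussianReal 0 1) := by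
  rw [auxDensity, integrable_withDensity_iff_integrable_smul auxMeasNN]
  refine hf.congr (ae_of_all _ fun y => ?_)
  simp only [NNReal.smul_def, smul_eq_mul]
  rw [Real.coe_toNNReal _ (gaussianPDFReal_nonneg 0 1 y)]

lemma auxEInt (a : ℝ) : Integrable (fun y : ℝ => (y - a)^2 * Real.exp (-y^2/2)) := by
  have h : (fun y : ℝ => (y - a)^2 * Real.exp (-y^2/2)) =
      fun y => y^2 * Real.exp (-y^2/2) +
        ((-2*a) * (y * Real.exp (-y^2/2)) + a^2 * Real.exp (-y^2/2)) := by
    funext y; ring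
  rw [h]
  exact auxL3.add ((auxL2.const_mul _).add (auxL1.const_mul _))

lemma auxGI1 (a : ℝ) : Integrable (fun y : ℝ => (y - a)^2) (gaussianReal 0 1) := by
  refine auxGint _ ?_
  refine ((auxEInt a).const_mul ((Real.sqrt (2*Real.pi))⁻¹)).congr (ae_of_all _ fun y => ?_)
  simp only []; rw [auxPDF]; ring

lemma auxGV1 (a : ℝ) : ∫ y, (y - a)^2 ∂(gaussianReal 0 1) = 1 + a^2 := by
  rw [auxGeq]
  have h : (fun y : ℝ => gaussianPDFReal 0 1 y * (y - a)^2) =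
      fun y => (Real.sqrt (2*Real.pi))⁻¹ *
        (y^2 * Real.exp (-y^2/2) +
          ((-2*a) * (y * Real.exp (-y^2/2)) + a^2 * Real.exp (-y^2/2))) := by
    funext y; rw [auxPDF]; ring
  have i2 : Integrable (fun y : ℝ => (-2*a) * (y * Real.exp (-y^2/2))) := auxL2.const_mul _
  have i3 : Integrable (fun y : ℝ => a^2 * Real.exp (-y^2/2)) := auxL1.const_mul _
  have i23 : Integrable (fun y : ℝ => (-2*a) * (y * Real.exp (-y^2/2)) + a^2 * Real.exp (-y^2/2)) := i2.add i3
  rw [h, integral_const_mul, integral_add auxL3 i23, integral_add i2 i3,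
    integral_const_mul, integral_const_mul, auxI0, auxI1, auxI2]
  have hpos : (0:ℝ) < Real.sqrt (2*Real.pi) := Real.sqrt_pos.mpr (by positivity)
  field_simp
  ring

lemma auxFInt (c : ℝ) : Integrable (fun u : ℝ => (max (u - c) 0)^2 * Real.exp (-u^2/2)) := by
  refine (auxEInt c).mono' ?_ (ae_of_all _ fun u => ?_)
  · exact (((continuous_id.sub continuous_const).max continuous_const).pow 2).mul
      (Real.continuous_exp.comp (by continuity)) |>.aestronglyMeasurable
  · rw [Real.norm_eq_abs, abs_of_nonneg (by positivity)]
    have h1 : (max (u - c) 0)^2 ≤ (u - c)^2 := by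
      rcases le_total (u - c) 0 with h | h
      · rw [max_eq_right h]; simpa using sq_nonneg (u - c)
      · rw [max_eq_left h]
    exact mul_le_mul_of_nonneg_right h1 (Real.exp_pos _).le

lemma auxPDFcont : Continuous (gaussianPDFReal 0 1) := by
  have h : gaussianPDFReal 0 1 = fun y => (Real.sqrt (2*Real.pi))⁻¹ * Real.exp (-y^2/2) :=
    funext auxPDF
  rw [h]
  exact continuous_const.mul (Real.continuous_exp.comp (by continuity))

lemma auxGI2 (c : ℝ) (hc : 0 ≤ c) :
    Integrable (fun y : ℝ => (max (|y| - c) 0)^2) (gaussianReal 0 1) := by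
  refine auxGint _ ?_
  refine (auxL3.const_mul ((Real.sqrt (2*Real.pi))⁻¹)).mono' ?_ (ae_of_all _ fun y => ?_)
  · refine (Continuous.mul auxPDFcont ?_).aestronglyMeasurable
    exact ((continuous_abs.sub continuous_const).max continuous_const).pow 2
  · have hnn : 0 ≤ gaussianPDFReal 0 1 y := gaussianPDFReal_nonneg 0 1 y
    rw [Real.norm_eq_abs, abs_of_nonneg (by positivity)]
    have h1 : (max (|y| - c) 0)^2 ≤ y^2 := by
      have h2 : max (|y| - c) 0 ≤ |y| := max_le (by linarith [abs_nonneg y]) (abs_nonneg y)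
      calc (max (|y| - c) 0)^2 ≤ |y|^2 := by
            exact pow_le_pow_left₀ (le_max_right _ _) h2 2
        _ = y^2 := sq_abs y
    rw [auxPDF]
    calc (Real.sqrt (2*Real.pi))⁻¹ * Real.exp (-y^2/2) * (max (|y| - c) 0)^2
        ≤ (Real.sqrt (2*Real.pi))⁻¹ * Real.exp (-y^2/2) * y^2 := by
          refine mul_le_mul_of_nonneg_left h1 (by positivity)
      _ = (Real.sqrt (2*Real.pi))⁻¹ * (y^2 * Real.exp (-y^2/2)) := by ring

lemma auxConst : (Real.sqrt (2*Real.pi))⁻¹ * 2 = Real.sqrt (2/Real.pi) := by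
  have hpos : (0:ℝ) < Real.sqrt (2*Real.pi) := Real.sqrt_pos.mpr (by positivity)
  have key : Real.sqrt (2/Real.pi) * Real.sqrt (2*Real.pi) = 2 := by
    rw [← Real.sqrt_mul (by positivity)]
    rw [show 2/Real.pi * (2*Real.pi) = 2^2 by field_simp]
    exact Real.sqrt_sq (by norm_num)
  rw [inv_mul_eq_div, eq_comm, eq_div_iff hpos.ne']
  exact key

lemma auxGV2 (c : ℝ) (hc : 0 ≤ c) :
    ∫ y, (max (|y| - c) 0)^2 ∂(gaussianReal 0 1) =
      Real.sqrt (2/Real.pi) * ∫ u in Set.Ioi c, (u - c)^2 * Real.exp (-u^2/2) := by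
  rw [auxGeq]
  have h1 : (fun y : ℝ => gaussianPDFReal 0 1 y * (max (|y| - c) 0)^2) =
      fun y => (Real.sqrt (2*Real.pi))⁻¹ * ((max (|y| - c) 0)^2 * Real.exp (-(|y|)^2/2)) := by
    funext y
    rw [auxPDF]
    simp only [sq_abs]
    ring
  rw [h1, integral_const_mul,
    integral_comp_abs (f := fun u => (max (u - c) 0)^2 * Real.exp (-u^2/2))]
  have hsplit : ∫ u in Set.Ioi (0:ℝ), (max (u - c) 0)^2 * Real.exp (-u^2/2) =
      (∫ u in Set.Ioc 0 c, (max (u - c) 0)^2 * Real.exp (-u^2/2)) +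
        ∫ u in Set.Ioi c, (max (u - c) 0)^2 * Real.exp (-u^2/2) := by
    rw [← setIntegral_union (Set.Ioc_disjoint_Ioi le_rfl) measurableSet_Ioi
      ((auxFInt c).integrableOn) ((auxFInt c).integrableOn)]
    rw [Set.Ioc_union_Ioi_eq_Ioi hc]
  have hzero : ∫ u in Set.Ioc (0:ℝ) c, (max (u - c) 0)^2 * Real.exp (-u^2/2) = 0 := by
    refine setIntegral_eq_zero_of_forall_eq_zero fun u hu => ?_
    rw [max_eq_right (by simp only [sub_nonpos]; exact hu.2)]
    ring
  have hcongr : ∫ u in Set.Ioi c, (max (u - c) 0)^2 * Real.exp (-u^2/2) =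
      ∫ u in Set.Ioi c, (u - c)^2 * Real.exp (-u^2/2) := by
    refine setIntegral_congr_fun measurableSet_Ioi fun u hu => ?_
    rw [max_eq_left (by simp only [sub_nonneg]; exact (le_of_lt hu))]
  rw [hsplit, hzero, hcongr, zero_add, ← mul_assoc, auxConst]

lemma auxMapEval (p : ℕ) (i : Fin p) :
    (Measure.pi fun _ : Fin p => gaussianReal 0 1).map (fun g => g i) = gaussianReal 0 1 := by
  classical
  ext s hs
  rw [Measure.map_apply (measurable_pi_apply i) hs]
  have hpre : (fun g : Fin p → ℝ => g i) ⁻¹' s =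
      Set.pi Set.univ (Function.update (fun _ : Fin p => (Set.univ : Set ℝ)) i s) := by
    ext g
    simp only [Set.mem_preimage, Set.mem_univ_pi, Function.update_apply]
    constructor
    · intro h j
      split_ifs with hj
      · subst hj; exact h
      · trivial
    · intro h
      have := h i
      simpa using this
  rw [hpre, Measure.pi_pi]
  rw [Fintype.prod_eq_single i (fun j hj => by
    rw [Function.update_of_ne hj]; exact measure_univ)]
  rw [Function.update_self]

lemma auxSqBound {gv zv wv tv : ℝ} (ht : 0 ≤ tv) (hz : |zv| ≤ wv) :
    (max (|gv| - tv * wv) 0)^2 ≤ (gv - tv * zv)^2 := by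
  have h1 : max (|gv| - tv * wv) 0 ≤ |gv - tv * zv| := by
    refine max_le ?_ (abs_nonneg _)
    have h2 : |gv| - |tv * zv| ≤ |gv - tv * zv| := abs_sub_abs_le_abs_sub _ _
    have h3 : |tv * zv| ≤ tv * wv := by
      rw [abs_mul, abs_of_nonneg ht]
      exact mul_le_mul_of_nonneg_left hz ht
    linarith
  calc (max (|gv| - tv * wv) 0)^2 ≤ |gv - tv * zv|^2 :=
        pow_le_pow_left₀ (le_max_right _ _) h1 2
    _ = (gv - tv * zv)^2 := sq_abs _

open Classical in
lemma auxSInf (p : ℕ) (x w : Fin p → ℝ) (hw : ∀ i, 0 < w i) (t : ℝ) (ht : 0 ≤ t)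
    (g : Fin p → ℝ) :
    sInf {d : ℝ | ∃ z : Fin p → ℝ,
      (∀ i, (x i ≠ 0 → z i = w i * Real.sign (x i)) ∧ (x i = 0 → |z i| ≤ w i)) ∧
      d = ∑ i, (g i - t * z i) ^ 2} =
    ∑ i, (if x i ≠ 0 then (g i - t * (w i * Real.sign (x i)))^2
          else (max (|g i| - t * w i) 0)^2) := by
  classical
  refine IsLeast.csInf_eq ⟨?_, ?_⟩
  · -- membership
    refine ⟨fun i => if x i ≠ 0 then w i * Real.sign (x i)
      else if t = 0 then 0 else max (-(w i)) (min (w i) (g i / t)), fun i => ⟨?_, ?_⟩, ?_⟩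
    · intro hx; simp only []; rw [if_pos hx]
    · intro hx
      simp only []
      rw [if_neg (by simpa using hx)]
      by_cases ht0 : t = 0
      · rw [if_pos ht0]
        simpa using (hw i).le
      · rw [if_neg ht0]
        rw [abs_le]
        constructor
        · exact le_max_left _ _
        · exact max_le (by linarith [(hw i).le]) (min_le_left _ _)
    · refine (Finset.sum_congr rfl fun i _ => ?_)
      simp only []
      by_cases hx : x i ≠ 0
      · rw [if_pos hx, if_pos hx]
      · rw [if_neg hx, if_neg hx]
        by_cases ht0 : t = 0
        · subst ht0
          rw [if_pos rfl]
          simp only [zero_mul, sub_zero, mul_zero]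
          rw [max_eq_left (abs_nonneg (g i)), sq_abs]
        · rw [if_neg ht0]
          have htp : 0 < t := lt_of_le_of_ne ht (Ne.symm ht0)
          by_cases h1 : |g i| ≤ t * w i
          · have hle : g i ≤ t * w i := (abs_le.mp h1).2
            have hge : -(t * w i) ≤ g i := (abs_le.mp h1).1
            have e1 : g i / t ≤ w i := by rw [div_le_iff₀ htp]; linarith [mul_comm (w i) t]
            have e2 : -(w i) ≤ g i / t := by
              rw [le_div_iff₀ htp]; nlinarith
            rw [min_eq_right e1, max_eq_right e2]
            rw [max_eq_right (sub_nonpos.mpr h1)]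
            have e3 : t * (g i / t) = g i := by field_simp
            rw [e3]
            ring
          · push_neg at h1
            by_cases h2 : 0 ≤ g i
            · have habs : |g i| = g i := abs_of_nonneg h2
              rw [habs] at h1
              have e1 : w i ≤ g i / t := by rw [le_div_iff₀ htp]; nlinarith
              rw [min_eq_left e1, max_eq_right (by linarith [(hw i).le] : -(w i) ≤ w i)]
              rw [max_eq_left (by rw [habs]; linarith)]
              rw [habs]
            · push_neg at h2
              have habs : |g i| = -(g i) := abs_of_neg h2
              rw [habs] at h1
              have e1 : g i / t ≤ -(w i) := by rw [div_le_iff₀ htp]; nlinarith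
              have e2 : g i / t ≤ w i := le_trans e1 (by linarith [(hw i).le])
              rw [min_eq_right e2, max_eq_left e1]
              rw [max_eq_left (by rw [habs]; linarith)]
              rw [habs]
              ring
  · rintro d ⟨z, hz, rfl⟩
    refine Finset.sum_le_sum fun i _ => ?_
    by_cases hx : x i ≠ 0
    · rw [if_pos hx, (hz i).1 hx]
    · rw [if_neg hx]
      exact auxSqBound ht ((hz i).2 (not_not.mp hx))

lemma auxSignSq {a : ℝ} (ha : a ≠ 0) : Real.sign a ^ 2 = 1 := by
  rcases lt_or_gt_of_ne ha with h | h
  · rw [Real.sign_of_neg h]; norm_num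
  · rw [Real.sign_of_pos h]; norm_num

end Stmt7Aux

open Classical in
/-- expected squared distance of a standard Gaussian vector to the dilated
subdifferential `t ∂‖·‖_{1,w}(x)`:
`E dist²(g, t∂‖·‖_{1,w}(x)) = |S| + ∑_{i∈S} (t wᵢ)² + ∑_{i∉S} φ(t wᵢ)`. -/
theorem stmt7 (p : ℕ) (x w : Fin p → ℝ) (hw : ∀ i, 0 < w i) (t : ℝ) (ht : 0 ≤ t) :
    (∫ g : Fin p → ℝ,
        sInf {d : ℝ | ∃ z : Fin p → ℝ,
          (∀ i, (x i ≠ 0 → z i = w i * Real.sign (x i)) ∧ (x i = 0 → |z i| ≤ w i)) ∧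
          d = ∑ i, (g i - t * z i) ^ 2}
        ∂(Measure.pi fun _ => gaussianReal 0 1)) =
      ∑ i, (if x i ≠ 0 then 1 + (t * w i) ^ 2
        else Real.sqrt (2 / Real.pi) *
          ∫ u in Set.Ioi (t * w i), (u - t * w i) ^ 2 * Real.exp (-u ^ 2 / 2)) := by
  classical
  set φ : Fin p → ℝ → ℝ := fun i y =>
    if x i ≠ 0 then (y - t * (w i * Real.sign (x i)))^2
    else (max (|y| - t * w i) 0)^2 with hφ
  have hφint : ∀ i, Integrable (φ i) (gaussianReal 0 1) := by
    intro i
    rw [hφ]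
    by_cases hx : x i ≠ 0
    · simp only [if_pos hx]
      exact auxGI1 _
    · simp only [if_neg hx]
      exact auxGI2 _ (mul_nonneg ht (hw i).le)
  have hstep1 : (∫ g : Fin p → ℝ,
      sInf {d : ℝ | ∃ z : Fin p → ℝ,
        (∀ i, (x i ≠ 0 → z i = w i * Real.sign (x i)) ∧ (x i = 0 → |z i| ≤ w i)) ∧
        d = ∑ i, (g i - t * z i) ^ 2}
      ∂(Measure.pi fun _ => gaussianReal 0 1)) =
      ∫ g : Fin p → ℝ, (∑ i, φ i (g i)) ∂(Measure.pi fun _ => gaussianReal 0 1) := by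
    refine integral_congr_ae (ae_of_all _ fun g => ?_)
    exact auxSInf p x w hw t ht g
  have hint2 : ∀ i : Fin p, Integrable (fun g : Fin p → ℝ => φ i (g i))
      (Measure.pi fun _ => gaussianReal 0 1) := by
    intro i
    have h1 : Integrable (φ i) ((Measure.pi fun _ : Fin p => gaussianReal 0 1).map
        (fun g => g i)) := by
      rw [auxMapEval p i]; exact hφint i
    have hasm : AEStronglyMeasurable (φ i)
        ((Measure.pi fun _ : Fin p => gaussianReal 0 1).map (fun g => g i)) := by
      rw [auxMapEval p i]; exact (hφint i).aestronglyMeasurable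
    exact (integrable_map_measure hasm (measurable_pi_apply i).aemeasurable).mp h1
  have hval : ∀ i : Fin p, (∫ g : Fin p → ℝ, φ i (g i)
      ∂(Measure.pi fun _ => gaussianReal 0 1)) = ∫ y, φ i y ∂(gaussianReal 0 1) := by
    intro i
    have hasm : AEStronglyMeasurable (φ i)
        ((Measure.pi fun _ : Fin p => gaussianReal 0 1).map (fun g => g i)) := by
      rw [auxMapEval p i]; exact (hφint i).aestronglyMeasurable
    have h := integral_map (μ := Measure.pi fun _ : Fin p => gaussianReal 0 1)
      (measurable_pi_apply i).aemeasurable hasm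
    rw [auxMapEval p i] at h
    exact h.symm
  rw [hstep1, integral_finset_sum _ (fun i _ => hint2 i)]
  refine Finset.sum_congr rfl fun i _ => ?_
  rw [hval i]
  by_cases hx : x i ≠ 0
  · rw [if_pos hx]
    have h1 : ∫ y, φ i y ∂(gaussianReal 0 1) =
        ∫ y, (y - t * (w i * Real.sign (x i)))^2 ∂(gaussianReal 0 1) := by
      refine integral_congr_ae (ae_of_all _ fun y => ?_)
      rw [hφ]; simp only [if_pos hx]
    rw [h1, auxGV1]
    have h2 : (t * (w i * Real.sign (x i)))^2 = (t * w i)^2 * (Real.sign (x i))^2 := by ring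
    rw [h2, auxSignSq hx, mul_one]
  · rw [if_neg hx]
    have h1 : ∫ y, φ i y ∂(gaussianReal 0 1) =
        ∫ y, (max (|y| - t * w i) 0)^2 ∂(gaussianReal 0 1) := by
      refine integral_congr_ae (ae_of_all _ fun y => ?_)
      rw [hφ]; simp only [if_neg hx]
    rw [h1, auxGV2 _ (mul_nonneg ht (hw i).le)]
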